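/- Suppose U₁ and U₂ are unitaries on the same space and each Uⱼ is an (αⱼ, a, 0)-block-encoding of a matrix Aⱼ. Let c₁, c₂ ≥ 0 with c₁ + c₂ = 1, and let V be the two-qubit-controlled select unitary |0⟩⟨0| ⊗ U₁ + |1⟩⟨1| ⊗ U₂, conjugated by the state-preparation unitary W sending |0⟩ to √c₁|0⟩ + √c₂|1⟩ on the selector qubit. Then (W† ⊗ I) V (W ⊗ I) is a (1, a+1, 0)-block-encoding of c₁·A₁/α₁ + c₂·A₂/α₂. -/
import Mathlib


open Matrix Kronecker


private lemma sum2_eq {α β : Type*} [Fintype α] [Fintype β] [DecidableEq α] [DecidableEq β]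
    (a : α) (b : β) (f : α → β → ℂ) :
    (∑ x : α, ∑ y : β, if x = a ∧ y = b then f x y else 0) = f a b := by
  rw [← Fintype.sum_prod_type']
  have : ∀ p : α × β, (p.1 = a ∧ p.2 = b) ↔ p = (a, b) := by
    intro p; rw [Prod.ext_iff]
  simp only [this]
  simp [Finset.sum_ite_eq']

private lemma sum2_eq' {α β : Type*} [Fintype α] [Fintype β] [DecidableEq α] [DecidableEq β]
    (a : α) (b : β) (f : α → β → ℂ) :
    (∑ x : α, ∑ y : β, if a = x ∧ b = y then f x y else 0) = f a b := by
  rw [← sum2_eq a b f]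
  simp [eq_comm]

/-- Linear combination of unitaries: if `Uⱼ` is an `(αⱼ, a, 0)`-block-encoding
of `Aⱼ`, `c₁ + c₂ = 1` with `c₁, c₂ ≥ 0`, `V = |0⟩⟨0| ⊗ U₁ + |1⟩⟨1| ⊗ U₂` is the
select unitary, and `W` is unitary with `W|0⟩ = √c₁|0⟩ + √c₂|1⟩`, then
`(Wᴴ ⊗ I) V (W ⊗ I)` is a `(1, a+1, 0)`-block-encoding of
`c₁·A₁/α₁ + c₂·A₂/α₂`. -/
theorem lcu_block_encoding (a N : ℕ) (α₁ α₂ : ℝ) (hα₁ : 0 < α₁) (hα₂ : 0 < α₂)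
    (U₁ U₂ : Matrix ((Fin a → Fin 2) × Fin N) ((Fin a → Fin 2) × Fin N) ℂ)
    (hU₁ : U₁ᴴ * U₁ = 1) (hU₂ : U₂ᴴ * U₂ = 1)
    (A₁ A₂ : Matrix (Fin N) (Fin N) ℂ)
    (hBE₁ : ∀ i j, U₁ (fun _ => 0, i) (fun _ => 0, j) = A₁ i j / (α₁ : ℂ))
    (hBE₂ : ∀ i j, U₂ (fun _ => 0, i) (fun _ => 0, j) = A₂ i j / (α₂ : ℂ))
    (c₁ c₂ : ℝ) (hc₁ : 0 ≤ c₁) (hc₂ : 0 ≤ c₂) (hsum : c₁ + c₂ = 1)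
    (W : Matrix (Fin 2) (Fin 2) ℂ) (hW : Wᴴ * W = 1)
    (hW0 : W 0 0 = (Real.sqrt c₁ : ℂ)) (hW1 : W 1 0 = (Real.sqrt c₂ : ℂ))
    (V : Matrix (Fin 2 × ((Fin a → Fin 2) × Fin N))
      (Fin 2 × ((Fin a → Fin 2) × Fin N)) ℂ)
    (hV : V = Matrix.of fun p q =>
      if p.1 = 0 ∧ q.1 = 0 then U₁ p.2 q.2
      else if p.1 = 1 ∧ q.1 = 1 then U₂ p.2 q.2
      else 0) :
    ∀ i j : Fin N,
      ((Wᴴ ⊗ₖ (1 : Matrix ((Fin a → Fin 2) × Fin N) ((Fin a → Fin 2) × Fin N) ℂ))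
          * V *
        (W ⊗ₖ (1 : Matrix ((Fin a → Fin 2) × Fin N) ((Fin a → Fin 2) × Fin N) ℂ)))
          ((0 : Fin 2), (fun _ => 0, i)) ((0 : Fin 2), (fun _ => 0, j))
        = (c₁ : ℂ) * A₁ i j / (α₁ : ℂ) + (c₂ : ℂ) * A₂ i j / (α₂ : ℂ) := by
  intro i j
  subst hV
  simp only [mul_apply, kroneckerMap_apply, Fintype.sum_prod_type, Fin.sum_univ_two,
    Matrix.of_apply, conjTranspose_apply, one_apply]
  simp only [mul_ite, ite_mul, mul_zero, zero_mul, mul_one, one_mul,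
    Finset.sum_ite_eq, Finset.sum_ite_eq', Finset.mem_univ, if_true]
  simp only [Prod.mk.injEq, show ((0:Fin 2) = 1) ↔ False by decide,
    show ((1:Fin 2) = 0) ↔ False by decide, true_and, and_true, false_and, and_false,
    if_true, if_false, true_iff, iff_true]
  simp only [Finset.sum_ite_eq, Finset.sum_ite_eq', Finset.mem_univ, if_true,
    Finset.sum_const_zero, add_zero, zero_add]
  simp only [sum2_eq, sum2_eq']
  rw [hBE₁ i j, hBE₂ i j, hW0, hW1]
  have h1 : (starRingEnd ℂ) ((Real.sqrt c₁ : ℝ) : ℂ) = ((Real.sqrt c₁ : ℝ) : ℂ) := by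
    simp [Complex.conj_ofReal]
  have h2 : (starRingEnd ℂ) ((Real.sqrt c₂ : ℝ) : ℂ) = ((Real.sqrt c₂ : ℝ) : ℂ) := by
    simp [Complex.conj_ofReal]
  simp only [RCLike.star_def, h1, h2]
  rw [show ((Real.sqrt c₁ : ℝ) : ℂ) * (A₁ i j / (α₁:ℂ)) * ((Real.sqrt c₁ : ℝ) : ℂ)
      = (((Real.sqrt c₁ * Real.sqrt c₁ : ℝ)) : ℂ) * A₁ i j / (α₁:ℂ) by push_cast; ring,
    show ((Real.sqrt c₂ : ℝ) : ℂ) * (A₂ i j / (α₂:ℂ)) * ((Real.sqrt c₂ : ℝ) : ℂ)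
      = (((Real.sqrt c₂ * Real.sqrt c₂ : ℝ)) : ℂ) * A₂ i j / (α₂:ℂ) by push_cast; ring,
    Real.mul_self_sqrt hc₁, Real.mul_self_sqrt hc₂]
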